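/- Let k ≥ 1 be an integer and let λ be a real number with 0 < λ ≤ 1. Let S be a nonempty finite set, and suppose that for each y ∈ S and each positive integer r a subset C(y,r) ⊆ S is given such that: (i) y ∈ C(y,1); (ii) C(y,r) ⊆ C(y,r') whenever r ≤ r'; and (iii) for all y, y' ∈ S and positive integers r' ≤ r, if C(y,2r) ∩ C(y',2r') ≠ ∅ then y' ∈ C(y,6r). For y ∈ S let r₀(y) be the largest positive integer r with |C(y,r)| ≥ λ·r^k (this exists since |C(y,1)| ≥ 1 ≥ λ·1^k and |C(y,r)| ≤ |S| for all r). Then there exist finitely many elements y₁, …, y_N ∈ S such that, writing r_i = r₀(y_i): (a) the sets C(y_i, 2r_i), i = 1, …, N, are pairwise disjoint; (b) S = C(y₁,6r₁) ∪ … ∪ C(y_N,6r_N); and (c) |S|/6^k ≤ Σ_{i=1}^N |C(y_i, r_i)| ≤ |S|. -/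

import Mathlib

private lemma greedy_list {γ : Type*} [DecidableEq γ]
    (S : Finset γ) (C : γ → ℕ → Finset γ) (r₀ : γ → ℕ)
    (hself6 : ∀ y ∈ S, y ∈ C y (6 * r₀ y)) :
    ∀ n : ℕ, ∀ T : Finset γ, T.card ≤ n → T ⊆ S →
      ∃ L : List γ,
        L.Pairwise (fun a b => r₀ b ≤ r₀ a ∧ b ∉ C a (6 * r₀ a)) ∧
        (∀ a ∈ L, a ∈ T) ∧
        (∀ s ∈ T, ∃ a ∈ L, s ∈ C a (6 * r₀ a)) := by
  intro n
  induction n with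
  | zero =>
    intro T hT _
    refine ⟨[], List.Pairwise.nil, by simp, ?_⟩
    intro s hs
    have : T = ∅ := Finset.card_eq_zero.mp (Nat.le_zero.mp hT)
    simp [this] at hs
  | succ n ih =>
    intro T hT hTS
    rcases T.eq_empty_or_nonempty with rfl | hTne
    · exact ⟨[], List.Pairwise.nil, by simp, by simp⟩
    · obtain ⟨y, hyT, hymax⟩ := T.exists_max_image r₀ hTne
      set T' := T \ C y (6 * r₀ y) with hT'
      have hyball : y ∈ C y (6 * r₀ y) := hself6 y (hTS hyT)
      have hT'ss : T' ⊆ T := Finset.sdiff_subset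
      have hcard : T'.card ≤ n := by
        have : T'.card < T.card :=
          Finset.card_lt_card ⟨hT'ss, fun h => by
            have := h hyT
            simp [hT'] at this
            exact this.2 hyball⟩
        omega
      obtain ⟨L, hLp, hLT, hLcov⟩ := ih T' hcard (hT'ss.trans hTS)
      refine ⟨y :: L, ?_, ?_, ?_⟩
      · refine List.Pairwise.cons ?_ hLp
        intro b hb
        have hbT' := hLT b hb
        have hbT := hT'ss hbT'
        refine ⟨hymax b hbT, ?_⟩
        simp [hT'] at hbT'
        exact hbT'.2
      · intro a ha
        rcases List.mem_cons.mp ha with rfl | ha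
        · exact hyT
        · exact hT'ss (hLT a ha)
      · intro s hs
        by_cases hsy : s ∈ C y (6 * r₀ y)
        · exact ⟨y, List.mem_cons_self, hsy⟩
        · obtain ⟨a, haL, hsa⟩ := hLcov s (by simp [hT', hs, hsy])
          exact ⟨a, List.mem_cons_of_mem _ haL, hsa⟩

theorem greedy_round_selection {γ : Type*} [DecidableEq γ] (k : ℕ) (hk : 1 ≤ k)
    (lam : ℝ) (hlam0 : 0 < lam) (hlam1 : lam ≤ 1)
    (S : Finset γ) (hS : S.Nonempty)
    (C : γ → ℕ → Finset γ)
    (hsub : ∀ y ∈ S, ∀ r : ℕ, 1 ≤ r → C y r ⊆ S)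
    (hself : ∀ y ∈ S, y ∈ C y 1)
    (hmono : ∀ y ∈ S, ∀ r r' : ℕ, 1 ≤ r → r ≤ r' → C y r ⊆ C y r')
    (htri : ∀ y ∈ S, ∀ y' ∈ S, ∀ r r' : ℕ, 1 ≤ r' → r' ≤ r →
      (C y (2 * r) ∩ C y' (2 * r')).Nonempty → y' ∈ C y (6 * r))
    (r₀ : γ → ℕ)
    (hr₀pos : ∀ y ∈ S, 1 ≤ r₀ y)
    (hr₀big : ∀ y ∈ S, lam * (r₀ y : ℝ) ^ k ≤ ((C y (r₀ y)).card : ℝ))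
    (hr₀max : ∀ y ∈ S, ∀ r : ℕ, r₀ y < r → ((C y r).card : ℝ) < lam * (r : ℝ) ^ k) :
    ∃ (N : ℕ) (y : Fin N → γ), (∀ i, y i ∈ S) ∧
      (∀ i j, i ≠ j →
        Disjoint (C (y i) (2 * r₀ (y i))) (C (y j) (2 * r₀ (y j)))) ∧
      (∀ s ∈ S, ∃ i, s ∈ C (y i) (6 * r₀ (y i))) ∧
      ((S.card : ℝ) / 6 ^ k ≤ ∑ i, ((C (y i) (r₀ (y i))).card : ℝ)) ∧
      (∑ i, ((C (y i) (r₀ (y i))).card : ℝ)) ≤ (S.card : ℝ) := by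
  have hself6 : ∀ y ∈ S, y ∈ C y (6 * r₀ y) := fun y hy =>
    hmono y hy 1 (6 * r₀ y) le_rfl (by have := hr₀pos y hy; omega) (hself y hy)
  obtain ⟨L, hLp, hLS', hLcov⟩ :=
    greedy_list S C r₀ hself6 S.card S le_rfl (Finset.Subset.refl S)
  have hLS : ∀ a ∈ L, a ∈ S := hLS'
  have hgetmem : ∀ i : Fin L.length, L.get i ∈ L := fun i => List.get_mem L i
  have hgetS : ∀ i : Fin L.length, L.get i ∈ S := fun i => hLS _ (hgetmem i)
  have hpair : ∀ i j : Fin L.length, i < j →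
      r₀ (L.get j) ≤ r₀ (L.get i) ∧ L.get j ∉ C (L.get i) (6 * r₀ (L.get i)) := by
    intro i j hij
    exact List.pairwise_iff_get.mp hLp i j hij
  have hdisj : ∀ i j : Fin L.length, i ≠ j →
      Disjoint (C (L.get i) (2 * r₀ (L.get i))) (C (L.get j) (2 * r₀ (L.get j))) := by
    have key : ∀ i j : Fin L.length, i < j →
        Disjoint (C (L.get i) (2 * r₀ (L.get i))) (C (L.get j) (2 * r₀ (L.get j))) := by
      intro i j hij
      obtain ⟨hle, hnot⟩ := hpair i j hij
      by_contra hnd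
      obtain ⟨x, hx⟩ := Finset.not_disjoint_iff.mp hnd
      have : L.get j ∈ C (L.get i) (6 * r₀ (L.get i)) :=
        htri _ (hgetS i) _ (hgetS j) _ _
          (hr₀pos _ (hgetS j)) hle
          ⟨x, Finset.mem_inter.mpr hx⟩
      exact hnot this
    intro i j hij
    rcases lt_or_gt_of_ne hij with h | h
    · exact key i j h
    · exact (key j i h).symm
  refine ⟨L.length, fun i => L.get i, hgetS, hdisj, ?_, ?_, ?_⟩
  · -- coverage
    intro s hs
    obtain ⟨a, haL, hsa⟩ := hLcov s hs
    obtain ⟨i, hi⟩ := List.get_of_mem haL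
    exact ⟨i, by show s ∈ C (L.get i) (6 * r₀ (L.get i)); rw [hi]; exact hsa⟩
  · -- lower bound
    have hcover : S ⊆ Finset.univ.biUnion (fun i : Fin L.length => C (L.get i) (6 * r₀ (L.get i))) := by
      intro s hs
      obtain ⟨a, haL, hsa⟩ := hLcov s hs
      obtain ⟨i, hi⟩ := List.get_of_mem haL
      exact Finset.mem_biUnion.mpr ⟨i, Finset.mem_univ i, by rw [hi]; exact hsa⟩
    have h1 : (S.card : ℝ) ≤ ∑ i : Fin L.length, ((C (L.get i) (6 * r₀ (L.get i))).card : ℝ) := by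
      calc (S.card : ℝ) ≤ ((Finset.univ.biUnion (fun i : Fin L.length => C (L.get i) (6 * r₀ (L.get i)))).card : ℝ) := by
            exact_mod_cast Nat.cast_le.mpr (Finset.card_le_card hcover)
        _ ≤ ∑ i : Fin L.length, ((C (L.get i) (6 * r₀ (L.get i))).card : ℝ) := by
            exact_mod_cast Finset.card_biUnion_le
    have h2 : ∀ i : Fin L.length,
        ((C (L.get i) (6 * r₀ (L.get i))).card : ℝ) ≤ 6 ^ k * ((C (L.get i) (r₀ (L.get i))).card : ℝ) := by
      intro i
      have hiS := hgetS i
      have hrpos := hr₀pos _ hiS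
      have hlt : r₀ (L.get i) < 6 * r₀ (L.get i) := by omega
      have := hr₀max _ hiS (6 * r₀ (L.get i)) hlt
      have hbig := hr₀big _ hiS
      have : ((C (L.get i) (6 * r₀ (L.get i))).card : ℝ) < lam * ((6 * r₀ (L.get i) : ℕ) : ℝ) ^ k := this
      have heq : lam * ((6 * r₀ (L.get i) : ℕ) : ℝ) ^ k = 6 ^ k * (lam * (r₀ (L.get i) : ℝ) ^ k) := by
        push_cast
        ring
      calc ((C (L.get i) (6 * r₀ (L.get i))).card : ℝ)
          ≤ lam * ((6 * r₀ (L.get i) : ℕ) : ℝ) ^ k := le_of_lt this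
        _ = 6 ^ k * (lam * (r₀ (L.get i) : ℝ) ^ k) := heq
        _ ≤ 6 ^ k * ((C (L.get i) (r₀ (L.get i))).card : ℝ) := by
            apply mul_le_mul_of_nonneg_left hbig (by positivity)
    have h3 : (S.card : ℝ) ≤ 6 ^ k * ∑ i : Fin L.length, ((C (L.get i) (r₀ (L.get i))).card : ℝ) := by
      calc (S.card : ℝ) ≤ ∑ i : Fin L.length, ((C (L.get i) (6 * r₀ (L.get i))).card : ℝ) := h1
        _ ≤ ∑ i : Fin L.length, 6 ^ k * ((C (L.get i) (r₀ (L.get i))).card : ℝ) :=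
            Finset.sum_le_sum fun i _ => h2 i
        _ = 6 ^ k * ∑ i : Fin L.length, ((C (L.get i) (r₀ (L.get i))).card : ℝ) := by
            rw [Finset.mul_sum]
    rw [div_le_iff₀ (by positivity)]
    linarith [h3]
  · -- upper bound
    have hsubs : ∀ i : Fin L.length, C (L.get i) (r₀ (L.get i)) ⊆ C (L.get i) (2 * r₀ (L.get i)) := by
      intro i
      have hiS := hgetS i
      exact hmono _ hiS _ _ (hr₀pos _ hiS) (by have := hr₀pos _ hiS; omega)
    have hunion : (Finset.univ.biUnion (fun i : Fin L.length => C (L.get i) (2 * r₀ (L.get i)))).card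
        = ∑ i : Fin L.length, (C (L.get i) (2 * r₀ (L.get i))).card :=
      Finset.card_biUnion (fun i _ j _ hij => hdisj i j hij)
    have hsubS : Finset.univ.biUnion (fun i : Fin L.length => C (L.get i) (2 * r₀ (L.get i))) ⊆ S := by
      intro x hx
      obtain ⟨i, _, hxi⟩ := Finset.mem_biUnion.mp hx
      have hiS := hgetS i
      exact hsub _ hiS _ (by have := hr₀pos _ hiS; omega) hxi
    have : ∑ i : Fin L.length, (C (L.get i) (r₀ (L.get i))).card ≤ S.card := by
      calc ∑ i : Fin L.length, (C (L.get i) (r₀ (L.get i))).card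
          ≤ ∑ i : Fin L.length, (C (L.get i) (2 * r₀ (L.get i))).card :=
            Finset.sum_le_sum fun i _ => Finset.card_le_card (hsubs i)
        _ = (Finset.univ.biUnion (fun i : Fin L.length => C (L.get i) (2 * r₀ (L.get i)))).card :=
            hunion.symm
        _ ≤ S.card := Finset.card_le_card hsubS
    exact_mod_cast this
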